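/- Consider the chores-only lexicographic instance with four agents N = {1,2,3,4} and five chores M = {o1,…,o5}, with importance orders: agent 1: o5 ⊳ o4 ⊳ o3 ⊳ o2 ⊳ o1; agent 2: o5 ⊳ o4 ⊳ o3 ⊳ o2 ⊳ o1; agent 3: o5 ⊳ o3 ⊳ o2 ⊳ o1 ⊳ o4; agent 4: o4 ⊳ o3 ⊳ o2 ⊳ o1 ⊳ o5. The allocation A_1 = {o1}, A_2 = {o2,o3}, A_3 = {o4}, A_4 = {o5} satisfies MMS but is not EFX. Hence for chores under lexicographic preferences, MMS does not imply EFX. -/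

import Mathlib

attribute [local instance 10] Classical.propDecidable

/-- A lexicographic mixed instance: each agent `i` has a set `G i` of goods
(its complement being the chores `C i`) and a strict linear importance order
`⊳_i` on the items, encoded as a linear order where larger means more important. -/
structure LexInstance (N M : Type) [Fintype N] [Fintype M] [DecidableEq M] where
  G : N → Finset M
  ord : N → LinearOrder M

namespace LexInstance

variable {N M : Type} [Fintype N] [Fintype M] [DecidableEq M]

/-- `inst.imp i a b` means `a ⊳_i b` : `a` is more important than `b` for agent `i`. -/
def imp (inst : LexInstance N M) (i : N) (a b : M) : Prop := (inst.ord i).lt b a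

/-- The chores of agent `i`. -/
def C (inst : LexInstance N M) (i : N) : Finset M := (inst.G i)ᶜ

/-- Strict lexicographic preference `X ≻_i Y`. -/
def SPref (inst : LexInstance N M) (i : N) (X Y : Finset M) : Prop :=
  (∃ g ∈ inst.G i ∩ (X \ Y), ∀ o ∈ Y ∩ inst.G i, inst.imp i o g → o ∈ X) ∨
  (∃ c ∈ inst.C i ∩ (Y \ X), ∀ o ∈ X ∩ inst.C i, inst.imp i o c → o ∈ Y)

/-- Weak lexicographic preference `X ⪰_i Y`. -/
def WPref (inst : LexInstance N M) (i : N) (X Y : Finset M) : Prop :=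
  inst.SPref i X Y ∨ X = Y

/-- A (complete) allocation: pairwise disjoint bundles whose union is all of `M`. -/
def IsAllocation (_inst : LexInstance N M) (A : N → Finset M) : Prop :=
  (∀ i j, i ≠ j → Disjoint (A i) (A j)) ∧ ∀ o : M, ∃ i, o ∈ A i

/-- Pareto optimality of a (complete) allocation. -/
def ParetoOptimal (inst : LexInstance N M) (A : N → Finset M) : Prop :=
  ¬ ∃ B : N → Finset M, inst.IsAllocation B ∧
      (∀ i, inst.WPref i (B i) (A i)) ∧ ∃ h, inst.SPref h (B h) (A h)

/-- The item agent `i` picks from the remaining set `R`: its `⊳_i`-greatest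
remaining good if there is one, and otherwise the `⊳_i`-least remaining item. -/
noncomputable def pickOne (inst : LexInstance N M) (i : N) (R : Finset M)
    (h : R.Nonempty) : M :=
  if hg : (R ∩ inst.G i).Nonempty then @Finset.max' M (inst.ord i) (R ∩ inst.G i) hg
  else @Finset.min' M (inst.ord i) R h

/-- Run the picking procedure along a sequence of agents, starting from the
remaining items `R`; returns the resulting bundles. -/
noncomputable def runPick (inst : LexInstance N M) : List N → Finset M → N → Finset M
  | [], _ => fun _ => ∅
  | i :: rest, R =>
    if h : R.Nonempty then
      fun j =>
        runPick inst rest (R.erase (inst.pickOne i R h)) j ∪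
          (if j = i then {inst.pickOne i R h} else ∅)
    else fun _ => ∅

/-- An allocation is sequencible if it is produced by some picking sequence of
length `|M|` starting from all items. -/
def Sequencible (inst : LexInstance N M) (A : N → Finset M) : Prop :=
  ∃ s : List N, s.length = Fintype.card M ∧ inst.runPick s Finset.univ = A

/-- A chores-only instance: every item is a chore for every agent. -/
def ChoresOnly (inst : LexInstance N M) : Prop := ∀ i, inst.G i = ∅

/-- Envy-freeness up to any item. -/
def EFX (inst : LexInstance N M) (A : N → Finset M) : Prop :=
  ∀ i h : N,
    (∀ o ∈ A h ∩ inst.G i, inst.WPref i (A i) ((A h).erase o)) ∧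
    (∀ o ∈ A i ∩ inst.C i, inst.WPref i ((A i).erase o) (A h))

/-- Envy-freeness up to any chore. -/
def EFXc (inst : LexInstance N M) (A : N → Finset M) : Prop :=
  ∀ i h : N, ∀ o ∈ A i ∩ inst.C i, inst.WPref i ((A i).erase o) (A h)

/-- Envy-freeness up to one item. -/
def EF1 (inst : LexInstance N M) (A : N → Finset M) : Prop :=
  ∀ i h : N, ((A i ∩ inst.C i) ∪ (A h ∩ inst.G i)).Nonempty →
    ∃ o ∈ (A i ∩ inst.C i) ∪ (A h ∩ inst.G i),
      inst.WPref i (A i) ((A h).erase o) ∨ inst.WPref i ((A i).erase o) (A h)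

/-- `A` gives every agent at least its maximin share: for every partition `P`
of the items into `n` bundles, agent `i` weakly prefers `A i` to some bundle of
`P` (hence to the `⪰_i`-least bundle of `P`). -/
def MMSfair (inst : LexInstance N M) (A : N → Finset M) : Prop :=
  ∀ i, ∀ P : N → Finset M, inst.IsAllocation P → ∃ j, inst.WPref i (A i) (P j)

/-- `B` is the maximin share `MMS_i` of agent `i`: `B` is the `⪰_i`-least bundle
of some partition of `M` into `n` bundles, and every such partition contains a
bundle to which `B` is weakly preferred. -/
def IsMMSBundle (inst : LexInstance N M) (i : N) (B : Finset M) : Prop :=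
  (∃ P : N → Finset M, inst.IsAllocation P ∧ (∃ j, P j = B) ∧
      ∀ j, inst.WPref i (P j) B) ∧
  (∀ P : N → Finset M, inst.IsAllocation P → ∃ j, inst.WPref i B (P j))

/-- The `k`-th (0-indexed) `⊳_i`-greatest good of agent `i`, if any. -/
noncomputable def kthGood (inst : LexInstance N M) (i : N) (k : ℕ) : Option M :=
  letI : LinearOrder M := inst.ord i
  (((inst.G i).sort (· ≤ ·)).reverse)[k]?

/-- The `k`-th (0-indexed) `⊳_i`-least chore of agent `i`, if any. -/
noncomputable def kthChore (inst : LexInstance N M) (i : N) (k : ℕ) : Option M :=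
  letI : LinearOrder M := inst.ord i
  ((inst.C i).sort  (· ≤ ·))[k]?

/-- Number of agents receiving their `k`-th (0-indexed) greatest good. -/
noncomputable def nPlus (inst : LexInstance N M) (A : N → Finset M) (k : ℕ) : ℕ :=
  (Finset.univ.filter fun i => (inst.kthGood i k).elim False (· ∈ A i)).card

/-- Number of agents receiving their `k`-th (0-indexed) least chore. -/
noncomputable def nMinus (inst : LexInstance N M) (A : N → Finset M) (k : ℕ) : ℕ :=
  (Finset.univ.filter fun i => (inst.kthChore i k).elim False (· ∈ A i)).card

/-- The rank signature `(n_1^+, …, n_m^+, n_1^-, …, n_m^-)` of an allocation. -/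
noncomputable def signature (inst : LexInstance N M) (A : N → Finset M) : List ℕ :=
  ((List.range (Fintype.card M)).map fun k => inst.nPlus A k) ++
    ((List.range (Fintype.card M)).map fun k => inst.nMinus A k)

/-- Rank-maximality: the signature is lexicographically maximal over allocations. -/
def RankMaximal (inst : LexInstance N M) (A : N → Finset M) : Prop :=
  inst.IsAllocation A ∧ ∀ B : N → Finset M, inst.IsAllocation B →
    ¬ List.Lex (· < ·) (inst.signature A) (inst.signature B)

end LexInstance

/-- The set of the `k` greatest (most important) elements of `S` under `L`. -/
def topK {M : Type} [DecidableEq M] (L : LinearOrder M) (S : Finset M) (k : ℕ) :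
    Finset M :=
  letI := L
  S.filter fun o => (S.filter fun o' => o < o').card < k

/-- Build a linear order on `Fin m` from an injective ranking function
(larger value = more important). -/
def mkOrd {m : ℕ} (f : Fin m → ℕ) (hf : Function.Injective f) : LinearOrder (Fin m) :=
  LinearOrder.lift' f hf

/-- The chores-only instance with four agents and five chores `0,…,4` standing
for `o1,…,o5`; agents 1,2: `o5 ⊳ o4 ⊳ o3 ⊳ o2 ⊳ o1`;
agent 3: `o5 ⊳ o3 ⊳ o2 ⊳ o1 ⊳ o4`; agent 4: `o4 ⊳ o3 ⊳ o2 ⊳ o1 ⊳ o5`. -/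
def inst14 : LexInstance (Fin 4) (Fin 5) where
  G := fun _ => ∅
  ord := ![mkOrd ![0, 1, 2, 3, 4] (by decide),
           mkOrd ![0, 1, 2, 3, 4] (by decide),
           mkOrd ![1, 2, 3, 0, 4] (by decide),
           mkOrd ![1, 2, 3, 4, 0] (by decide)]

/-- The allocation `A₁ = {o1}`, `A₂ = {o2,o3}`, `A₃ = {o4}`, `A₄ = {o5}`. -/
def alloc14 : Fin 4 → Finset (Fin 5) := ![{0}, {1, 2}, {3}, {4}]

instance impDec (i : Fin 4) (a b : Fin 5) : Decidable (inst14.imp i a b) :=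
  (inst14.ord i).toDecidableLT b a

instance sprefDec (i : Fin 4) (X Y : Finset (Fin 5)) : Decidable (inst14.SPref i X Y) := by
  unfold LexInstance.SPref; infer_instance

instance wprefDec (i : Fin 4) (X Y : Finset (Fin 5)) : Decidable (inst14.WPref i X Y) := by
  unfold LexInstance.WPref; infer_instance

/-- this allocation satisfies MMS but is not EFX; hence for
chores under lexicographic preferences MMS does not imply EFX. -/
theorem mms_not_efx_chores :
    inst14.IsAllocation alloc14 ∧ inst14.MMSfair alloc14 ∧ ¬ inst14.EFX alloc14 := by
  refine ⟨by unfold LexInstance.IsAllocation; decide, ?_, by unfold LexInstance.EFX; decide⟩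
  intro i P hP
  fin_cases i
  · obtain ⟨j, hj⟩ := hP.2 4
    exact ⟨j, Or.inl (Or.inr ⟨4,
      by simp only [Finset.mem_inter, Finset.mem_sdiff]; exact ⟨by decide, hj, by decide⟩,
      fun o _ himp => absurd himp (by revert o; decide)⟩)⟩
  · obtain ⟨j, hj⟩ := hP.2 4
    exact ⟨j, Or.inl (Or.inr ⟨4,
      by simp only [Finset.mem_inter, Finset.mem_sdiff]; exact ⟨by decide, hj, by decide⟩,
      fun o _ himp => absurd himp (by revert o; decide)⟩)⟩
  · obtain ⟨j, hj⟩ := hP.2 4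
    exact ⟨j, Or.inl (Or.inr ⟨4,
      by simp only [Finset.mem_inter, Finset.mem_sdiff]; exact ⟨by decide, hj, by decide⟩,
      fun o _ himp => absurd himp (by revert o; decide)⟩)⟩
  · obtain ⟨j, hj⟩ := hP.2 3
    exact ⟨j, Or.inl (Or.inr ⟨3,
      by simp only [Finset.mem_inter, Finset.mem_sdiff]; exact ⟨by decide, hj, by decide⟩,
      fun o _ himp => absurd himp (by revert o; decide)⟩)⟩
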